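/- Let $X, y$ define an OLS problem with $X^\top X$ invertible and $h_j < 1$. Then the squared Mahalanobis change in the OLS solution upon removing point $j$ satisfies $\|(X^\top X)^{1/2}(\beta_{\mathrm{ols}} - \beta_{(-j)})\|^2 = \frac{h_j\, e_j^2}{(1 - h_j)^2}$, where $e_j = y_j - \langle x_j, \beta_{\mathrm{ols}}\rangle$. -/

import Mathlib

open Matrix
open scoped Classical

/-- Square root of a positive semidefinite matrix (junk value `0` otherwise). -/
noncomputable def msqrt {d : ℕ} (S : Matrix (Fin d) (Fin d) ℝ) :
    Matrix (Fin d) (Fin d) ℝ :=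
  if h : S.PosSemidef then
    (h.1.eigenvectorUnitary : Matrix (Fin d) (Fin d) ℝ) *
      diagonal (Real.sqrt ∘ h.1.eigenvalues) *
      (star h.1.eigenvectorUnitary : Matrix (Fin d) (Fin d) ℝ)
  else 0

lemma vecMulVec_mulVec' {d : ℕ} (u w : Fin d → ℝ) :
    vecMulVec u u *ᵥ w = (u ⬝ᵥ w) • u := by
  ext i
  simp [vecMulVec, mulVec, dotProduct, Finset.mul_sum, mul_assoc, mul_comm, mul_left_comm]

/-- The squared Mahalanobis change in the OLS solution upon removing point `j`:
`‖(XᵀX)^{1/2}(β_ols − β_{(−j)})‖² = h_j e_j² / (1−h_j)²`. -/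
theorem ols_remove_one_mahalanobis {n d : ℕ} (X : Matrix (Fin n) (Fin d) ℝ)
    (y : Fin n → ℝ) (j : Fin n)
    (hX : IsUnit (Xᵀ * X).det)
    (hXj : IsUnit (Xᵀ * X - vecMulVec (X j) (X j)).det)
    (hj : X j ⬝ᵥ ((Xᵀ * X)⁻¹ *ᵥ X j) < 1) :
    (∑ i : Fin d,
      ((msqrt (Xᵀ * X)) *ᵥ
        (((Xᵀ * X)⁻¹ *ᵥ (Xᵀ *ᵥ y)) -
          ((Xᵀ * X - vecMulVec (X j) (X j))⁻¹ *ᵥ (Xᵀ *ᵥ y - y j • X j)))) i ^ 2)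
    = (X j ⬝ᵥ ((Xᵀ * X)⁻¹ *ᵥ X j)) *
        (y j - X j ⬝ᵥ ((Xᵀ * X)⁻¹ *ᵥ (Xᵀ *ᵥ y)))^2 /
        (1 - X j ⬝ᵥ ((Xᵀ * X)⁻¹ *ᵥ X j))^2 := by
  set A := Xᵀ * X with hA
  set u := X j with hu
  set b := Xᵀ *ᵥ y with hb
  set v : Fin d → ℝ := A⁻¹ *ᵥ u with hv
  set β : Fin d → ℝ := A⁻¹ *ᵥ b with hβ
  set hh : ℝ := u ⬝ᵥ v with hhdef
  set e : ℝ := y j - u ⬝ᵥ β with hedef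
  have h1 : (1 : ℝ) - hh ≠ 0 := by linarith
  set c : ℝ := e / (1 - hh) with hcdef
  have hApsd : A.PosSemidef := by
    have := Matrix.posSemidef_conjTranspose_mul_self X
    rwa [Matrix.conjTranspose_eq_transpose_of_trivial] at this
  have hAv : A *ᵥ v = u := by
    rw [hv, Matrix.mulVec_mulVec, Matrix.mul_nonsing_inv _ hX, Matrix.one_mulVec]
  have hAβ : A *ᵥ β = b := by
    rw [hβ, Matrix.mulVec_mulVec, Matrix.mul_nonsing_inv _ hX, Matrix.one_mulVec]
  -- the removed-point solution
  have key : (A - vecMulVec u u)⁻¹ *ᵥ (b - y j • u) = β - c • v := by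
    have hM : (A - vecMulVec u u) *ᵥ (β - c • v) = b - y j • u := by
      rw [Matrix.sub_mulVec, Matrix.mulVec_sub, Matrix.mulVec_sub,
        Matrix.mulVec_smul, hAv, hAβ, vecMulVec_mulVec', vecMulVec_mulVec']
      have hce : c * (1 - hh) = e := div_mul_cancel₀ _ h1
      have : u ⬝ᵥ (c • v) = c * hh := by
        simp [dotProduct_smul, hhdef, smul_eq_mul]
      rw [this]
      have hyj : c + ((u ⬝ᵥ β) - c * hh) = y j := by
        linear_combination hce.trans hedef
      ext i
      simp only [Pi.sub_apply, Pi.smul_apply, smul_eq_mul, ← hyj]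
      ring
    rw [← hM, Matrix.mulVec_mulVec, Matrix.nonsing_inv_mul _ hXj, Matrix.one_mulVec]
  rw [key]
  have hsub : β - (β - c • v) = c • v := by ring_nf
  rw [hsub]
  -- quadratic form computation
  set M := msqrt A with hM
  set U : Matrix (Fin d) (Fin d) ℝ := (hApsd.1.eigenvectorUnitary : Matrix (Fin d) (Fin d) ℝ)
    with hUdef
  set D : Matrix (Fin d) (Fin d) ℝ := diagonal (Real.sqrt ∘ hApsd.1.eigenvalues) with hDdef
  have hMval : M = U * D * star U := by rw [hM, msqrt, dif_pos hApsd]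
  have hMsym : Mᵀ = M := by
    rw [hMval, transpose_mul, transpose_mul, hDdef, diagonal_transpose, star_eq_conjTranspose,
      conjTranspose_eq_transpose_of_trivial, transpose_transpose, mul_assoc]
  have hMM : M * M = A := by
    have hU : star U * U = 1 := Unitary.star_mul_self_of_mem hApsd.1.eigenvectorUnitary.2
    rw [hMval, show U * D * star U * (U * D * star U) = U * D * (star U * U) * D * star U by
      simp only [mul_assoc], hU, mul_one, mul_assoc U D D, hDdef, diagonal_mul_diagonal]
    conv_rhs => rw [hApsd.1.spectral_theorem, Unitary.conjStarAlgAut_apply]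
    congr 3
    ext i
    simp [Real.mul_self_sqrt (hApsd.eigenvalues_nonneg i)]
  have hsum : ∑ i : Fin d, (M *ᵥ (c • v)) i ^ 2 = c ^ 2 * hh := by
    have : ∑ i : Fin d, (M *ᵥ (c • v)) i ^ 2
        = (M *ᵥ (c • v)) ⬝ᵥ (M *ᵥ (c • v)) := by
      simp [dotProduct, sq]
    rw [this, Matrix.dotProduct_mulVec, ← Matrix.mulVec_transpose, hMsym,
      Matrix.mulVec_mulVec, hMM]
    rw [Matrix.mulVec_smul, hAv]
    simp [dotProduct_smul, smul_dotProduct, hhdef, smul_eq_mul, dotProduct_comm u v]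
    ring
  rw [hsum, hcdef]
  field_simp
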